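/- Let b : ℝ → ℍ and let Ψ : ℝ → ℍ be twice differentiable with Ψ(x) ≠ 0 for all x ∈ ℝ, satisfying Ψ''(x) = b(x) * Ψ(x) for all x. Then u(x) := Ψ'(x) * (Ψ(x))⁻¹ is differentiable and satisfies the quaternionic Riccati equation u'(x) = −u(x)·u(x) + b(x) for all x ∈ ℝ. In particular, for the zero-energy stationary quaternionic Schrödinger equation in 1+1 dimensions, where b(x) = (2m/ℏ²)·(V(x) + k·W(x)) with a real potential V and a complex potential W, the logarithmic derivative u = Ψ'Ψ⁻¹ of the wave function satisfies the quaternionic Riccati equation u' = −u² + (2m/ℏ²)(V + kW). -/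

import Mathlib

open scoped Quaternion

/-- For the (zero-energy stationary) quaternionic Schrödinger equation in 1+1
dimensions, written as `Ψ'' = b Ψ` with `b = (2m/ℏ²)(V + kW)`, the logarithmic
derivative `u = Ψ' Ψ⁻¹` of a nonvanishing wave function satisfies the quaternionic
Riccati equation `u' = −u² + b`. -/
theorem quaternionic_schrodinger_to_riccati
    (b : ℝ → ℍ[ℝ]) (Ψ Ψ' : ℝ → ℍ[ℝ])
    (hΨ : ∀ x, Ψ x ≠ 0)
    (hΨ' : ∀ x, HasDerivAt Ψ (Ψ' x) x)
    (hΨ'' : ∀ x, HasDerivAt Ψ' (b x * Ψ x) x) :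
    ∀ x, HasDerivAt (fun x => Ψ' x * (Ψ x)⁻¹)
      (-((Ψ' x * (Ψ x)⁻¹) * (Ψ' x * (Ψ x)⁻¹)) + b x) x := by
  intro x
  have hinv : HasDerivAt (fun x => (Ψ x)⁻¹)
      (-((Ψ x)⁻¹ * Ψ' x * (Ψ x)⁻¹)) x := by
    have := (hasFDerivAt_inv' (𝕜 := ℝ) (hΨ x)).comp_hasDerivAt x (hΨ' x)
    exact this
  have h : HasDerivAt (fun x => Ψ' x * (Ψ x)⁻¹)
      (b x * Ψ x * (Ψ x)⁻¹ + Ψ' x * -((Ψ x)⁻¹ * Ψ' x * (Ψ x)⁻¹)) x := (hΨ'' x).mul hinv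
  convert h using 1
  rw [mul_assoc (b x), mul_inv_cancel₀ (hΨ x), mul_one, add_comm]
  simp [mul_assoc]
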